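/- Change of variables along vertical trajectories: if f : X → X is a C¹ orientation-preserving diffeomorphism, φ holomorphic on X, γ a vertical trajectory of φ dz⊗dz on which f is C¹, and ∂_v f = f_z - (φ/|φ|)f_{z̄}, then ∫_γ |∂_v f|·√(|φ∘f|) |dz| = ∫_{f(γ)} √|φ| |dz|. -/

import Mathlib

open Complex intervalIntegral

noncomputable def wirtingerZ (D : ℂ →L[ℝ] ℂ) : ℂ := (D 1 - Complex.I * D Complex.I) / 2

noncomputable def wirtingerZbar (D : ℂ →L[ℝ] ℂ) : ℂ := (D 1 + Complex.I * D Complex.I) / 2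

lemma wirtinger_apply (D : ℂ →L[ℝ] ℂ) (w : ℂ) :
    D w = wirtingerZ D * w + wirtingerZbar D * (starRingEnd ℂ) w := by
  have hw : w = w.re • (1 : ℂ) + w.im • Complex.I := by
    simp [Complex.real_smul, Complex.re_add_im]
  have h : D w = (w.re : ℂ) * D 1 + (w.im : ℂ) * D Complex.I := by
    nth_rewrite 1 [hw]
    rw [map_add, map_smul, map_smul, Complex.real_smul, Complex.real_smul]
  rw [h, wirtingerZ, wirtingerZbar]
  rw [show (starRingEnd ℂ) w = (w.re : ℂ) - (w.im : ℂ) * Complex.I by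
    simp [Complex.ext_iff]]
  set x : ℂ := (w.re : ℂ) with hx
  set y : ℂ := (w.im : ℂ) with hy
  have hw2 : w = x + y * Complex.I := (Complex.re_add_im w).symm
  rw [hw2]
  linear_combination (y * D Complex.I) * Complex.I_sq

/-- Change of variables along vertical trajectories (identity (3.8)): if `f` is a `C¹`
orientation-preserving diffeomorphism, `φ` is holomorphic, `γ` is a vertical trajectory of
`φ dz⊗dz` and `∂_v f = f_z - (φ/|φ|) f_z̄`, then
`∫_γ |∂_v f|·√|φ∘f| |dz| = ∫_{f(γ)} √|φ| |dz|`. -/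
theorem change_of_variables_along_vertical_trajectory
    (X : Set ℂ) (hX : IsOpen X)
    (f : ℂ → ℂ) (Df : ℂ → ℂ →L[ℝ] ℂ)
    (hf : ∀ z ∈ X, HasFDerivAt f (Df z) z)
    (hfJ : ∀ z ∈ X, 0 < ‖wirtingerZ (Df z)‖^2
      - ‖wirtingerZbar (Df z)‖^2)
    (φ : ℂ → ℂ) (hφ : DifferentiableOn ℂ φ X)
    (a b : ℝ) (hab : a ≤ b)
    (γ : ℝ → ℂ) (hγX : ∀ t ∈ Set.Icc a b, γ t ∈ X)
    (hγdiff : ∀ t ∈ Set.Icc a b, DifferentiableAt ℝ γ t)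
    (hvert : ∀ t ∈ Set.Icc a b,
      ((deriv γ t)^2 * φ (γ t)).im = 0 ∧ ((deriv γ t)^2 * φ (γ t)).re < 0) :
    ∫ t in a..b,
        ‖wirtingerZ (Df (γ t))
            - φ (γ t) / ((‖φ (γ t)‖ : ℝ) : ℂ) * wirtingerZbar (Df (γ t))‖
          * Real.sqrt ‖φ (f (γ t))‖ * ‖deriv γ t‖
      = ∫ t in a..b,
          Real.sqrt ‖φ ((f ∘ γ) t)‖ * ‖deriv (f ∘ γ) t‖ := by
  apply intervalIntegral.integral_congr
  intro t ht
  rw [Set.uIcc_of_le hab] at ht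
  set c : ℂ := deriv γ t with hc
  set p : ℂ := φ (γ t) with hp
  set A : ℂ := wirtingerZ (Df (γ t)) with hA
  set B : ℂ := wirtingerZbar (Df (γ t)) with hB
  obtain ⟨him, hre⟩ := hvert t ht
  rw [← hc, ← hp] at him hre
  -- c ≠ 0 and p ≠ 0
  have hc0 : c ≠ 0 := by
    intro h; rw [h] at hre; simp at hre
  have hp0 : p ≠ 0 := by
    intro h; rw [h] at hre; simp at hre
  -- c^2 * p is the negative real -r
  set r : ℝ := -((c ^ 2 * p).re) with hr
  have hrpos : 0 < r := by simpa [hr] using hre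
  have h1 : c ^ 2 * p = -(r : ℝ) := by
    apply Complex.ext <;> simp [hr, him]
  -- |c|^2 * |p| = r
  have habs : ‖c‖ ^ 2 * ‖p‖ = r := by
    have := congrArg (norm : ℂ → ℝ) h1
    rwa [norm_mul, norm_pow, norm_neg, Complex.norm_real,
      Real.norm_of_nonneg hrpos.le] at this
  -- key identity : (p / |p|) * c = - conj c
  have hkey : p / ((‖p‖ : ℝ) : ℂ) * c = -(starRingEnd ℂ) c := by
    have hap : ((‖p‖ : ℝ) : ℂ) ≠ 0 := by
      simp [norm_ne_zero_iff.mpr hp0]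
    field_simp
    have hcc : (starRingEnd ℂ) c * c = ((‖c‖ : ℝ) ^ 2 : ℂ) := by
      rw [mul_comm, Complex.mul_conj]
      norm_cast
      rw [Complex.sq_norm, Complex.normSq_apply]
    -- p * c = -conj c * |p|  ⟺  p * c^2 = -|c|^2 * |p|
    have h2 : p * c * c = -((starRingEnd ℂ) c * ((‖p‖ : ℝ) : ℂ)) * c := by
      have : p * c * c = c ^ 2 * p := by ring
      rw [this, h1]
      rw [show -((starRingEnd ℂ) c * ((‖p‖ : ℝ) : ℂ)) * c
          = -((starRingEnd ℂ) c * c) * ((‖p‖ : ℝ) : ℂ) by ring, hcc]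
      push_cast
      rw [← habs]
      push_cast
      ring
    rw [mul_comm ((‖p‖ : ℝ) : ℂ)]
    exact mul_right_cancel₀ hc0 h2
  -- chain rule
  have hd : HasDerivAt (f ∘ γ) (Df (γ t) c) t :=
    (hf _ (hγX t ht)).comp_hasDerivAt t (hγdiff t ht).hasDerivAt
  have hderiv : deriv (f ∘ γ) t = A * c + B * (starRingEnd ℂ) c := by
    rw [hd.deriv, wirtinger_apply]
  -- combine
  have hmain : (A - p / ((‖p‖ : ℝ) : ℂ) * B) * c
      = A * c + B * (starRingEnd ℂ) c := by
    have : (A - p / ((‖p‖ : ℝ) : ℂ) * B) * c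
        = A * c - (p / ((‖p‖ : ℝ) : ℂ) * c) * B := by ring
    rw [this, hkey]; ring
  have : ‖A - p / ((‖p‖ : ℝ) : ℂ) * B‖ * ‖c‖
      = ‖deriv (f ∘ γ) t‖ := by
    rw [← norm_mul, hmain, hderiv]
  simp only [Function.comp_apply]
  rw [← this]
  ring
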